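/- For every z ∈ ℝ^S, A ∈ ℝ^{S×m} and X ∈ ℝ^{n×m}, the spectral norm satisfies ‖(diag(z)A)∗X‖ ≤ ‖z‖ · max_{ν∈[S]} ‖X·diag(A_ν)‖ ≤ ‖z‖ · ‖A‖_∞ · ‖X‖, where ‖z‖ is the Euclidean norm of z, A_ν denotes the ν-th row of A, and ‖A‖_∞ is the maximum absolute value of an entry of A. -/

import Mathlib

open scoped BigOperators

/-- The Euclidean norm of a finitely supported real vector. -/
noncomputable def eNorm {β : Type*} [Fintype β] (v : β → ℝ) : ℝ :=
  Real.sqrt (∑ i, v i ^ 2)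

/-- The spectral norm of a real matrix: `‖M‖ = max_{ξ ∈ S^{m-1}} ‖Mξ‖`. -/
noncomputable def specNorm {α β : Type*} [Fintype α] [Fintype β]
    (M : Matrix α β ℝ) : ℝ :=
  ⨆ ξ : {v : β → ℝ // eNorm v = 1}, eNorm (M.mulVec ξ.1)

/-- The column-wise Khatri–Rao product: `(A ∗ X)_{(ν,i),j} = A_{νj} ⬝ X_{ij}`. -/
def khatriRao {S n m : ℕ} (A : Matrix (Fin S) (Fin m) ℝ) (X : Matrix (Fin n) (Fin m) ℝ) :
    Matrix (Fin S × Fin n) (Fin m) ℝ :=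
  Matrix.of fun p j => A p.1 j * X p.2 j

section AuxLemmas

variable {α β : Type*} [Fintype α] [Fintype β]

lemma eNorm_nonneg (v : β → ℝ) : 0 ≤ eNorm v := Real.sqrt_nonneg _

lemma sq_eNorm (v : β → ℝ) : eNorm v ^ 2 = ∑ i, v i ^ 2 :=
  Real.sq_sqrt (Finset.sum_nonneg fun _ _ => sq_nonneg _)

lemma eNorm_le_of_sq_le_sq {v : β → ℝ} {c : ℝ} (hc : 0 ≤ c)
    (h : ∑ i, v i ^ 2 ≤ c ^ 2) : eNorm v ≤ c := by
  have h2 := Real.sqrt_le_sqrt h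
  rwa [Real.sqrt_sq hc] at h2

lemma eNorm_smul (c : ℝ) (v : β → ℝ) : eNorm (c • v) = |c| * eNorm v := by
  unfold eNorm
  rw [← Real.sqrt_sq_eq_abs, ← Real.sqrt_mul (sq_nonneg c), Finset.mul_sum]
  congr 1
  refine Finset.sum_congr rfl fun i _ => ?_
  simp [mul_pow]

lemma mulVec_sq_le (M : Matrix α β ℝ) (v : β → ℝ) :
    ∑ i, M.mulVec v i ^ 2 ≤ (∑ i, ∑ j, M i j ^ 2) * ∑ j, v j ^ 2 := by
  rw [Finset.sum_mul]
  refine Finset.sum_le_sum fun i _ => ?_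
  exact Finset.sum_mul_sq_le_sq_mul_sq _ _ _

lemma eNorm_mulVec_le_fro (M : Matrix α β ℝ) (v : β → ℝ) :
    eNorm (M.mulVec v) ≤ Real.sqrt (∑ i, ∑ j, M i j ^ 2) * eNorm v := by
  refine eNorm_le_of_sq_le_sq
    (mul_nonneg (Real.sqrt_nonneg _) (eNorm_nonneg _)) ?_
  rw [mul_pow, Real.sq_sqrt (by positivity : (0:ℝ) ≤ ∑ i, ∑ j, M i j ^ 2), sq_eNorm]
  exact mulVec_sq_le M v

lemma specNorm_bdd (M : Matrix α β ℝ) :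
    BddAbove (Set.range fun ξ : {v : β → ℝ // eNorm v = 1} => eNorm (M.mulVec ξ.1)) := by
  refine ⟨Real.sqrt (∑ i, ∑ j, M i j ^ 2), ?_⟩
  rintro _ ⟨ξ, rfl⟩
  have h := eNorm_mulVec_le_fro M ξ.1
  rwa [ξ.2, mul_one] at h

lemma le_specNorm (M : Matrix α β ℝ) {ξ : β → ℝ} (hξ : eNorm ξ = 1) :
    eNorm (M.mulVec ξ) ≤ specNorm M :=
  le_ciSup (specNorm_bdd M) (⟨ξ, hξ⟩ : {v : β → ℝ // eNorm v = 1})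

lemma specNorm_nonneg (M : Matrix α β ℝ) : 0 ≤ specNorm M :=
  Real.iSup_nonneg fun _ => eNorm_nonneg _

lemma specNorm_le (M : Matrix α β ℝ) {C : ℝ} (hC : 0 ≤ C)
    (h : ∀ ξ : β → ℝ, eNorm ξ = 1 → eNorm (M.mulVec ξ) ≤ C) : specNorm M ≤ C :=
  Real.iSup_le (fun ξ => h ξ.1 ξ.2) hC

lemma eNorm_mulVec_le (M : Matrix α β ℝ) (v : β → ℝ) :
    eNorm (M.mulVec v) ≤ specNorm M * eNorm v := by
  by_cases hv : eNorm v = 0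
  · have hsum : ∑ i, v i ^ 2 = 0 := by
      have := Real.sqrt_eq_zero (Finset.sum_nonneg fun _ _ => sq_nonneg _) |>.mp hv
      exact this
    have hv0 : v = 0 := by
      funext i
      have := (Finset.sum_eq_zero_iff_of_nonneg fun j _ => sq_nonneg (v j)).mp hsum i
        (Finset.mem_univ i)
      exact pow_eq_zero_iff (by norm_num) |>.mp this
    subst hv0
    rw [Matrix.mulVec_zero, hv, mul_zero]
    simp [eNorm]
  · have hpos : 0 < eNorm v := lt_of_le_of_ne (eNorm_nonneg v) (Ne.symm hv)
    set c := eNorm v with hc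
    have hu : eNorm (c⁻¹ • v) = 1 := by
      rw [eNorm_smul, abs_of_pos (inv_pos.mpr hpos), ← hc, inv_mul_cancel₀ hv]
    have hvc : v = c • (c⁻¹ • v) := by
      rw [smul_smul, mul_inv_cancel₀ hv, one_smul]
    calc eNorm (M.mulVec v) = eNorm (M.mulVec (c • (c⁻¹ • v))) := by rw [← hvc]
      _ = c * eNorm (M.mulVec (c⁻¹ • v)) := by
          rw [Matrix.mulVec_smul, eNorm_smul, abs_of_pos hpos]
      _ ≤ c * specNorm M :=
          mul_le_mul_of_nonneg_left (le_specNorm M hu) (le_of_lt hpos)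
      _ = specNorm M * eNorm v := by rw [mul_comm]

end AuxLemmas

/-- `‖(diag(z)A) ∗ X‖ ≤ ‖z‖ ⬝ max_ν ‖X ⬝ diag(A_ν)‖
  ≤ ‖z‖ ⬝ ‖A‖_∞ ⬝ ‖X‖`, where `‖z‖` is the Euclidean norm of `z`, `A_ν` is the
`ν`-th row of `A` and `‖A‖_∞` is the maximum absolute value of an entry of `A`. -/
theorem specNorm_diag_khatriRao_le_l2 {S n m : ℕ} (z : Fin S → ℝ)
    (A : Matrix (Fin S) (Fin m) ℝ) (X : Matrix (Fin n) (Fin m) ℝ) :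
    specNorm (khatriRao (Matrix.diagonal z * A) X) ≤
        eNorm z * ⨆ ν : Fin S, specNorm (X * Matrix.diagonal fun j => A ν j) ∧
      eNorm z * (⨆ ν : Fin S, specNorm (X * Matrix.diagonal fun j => A ν j)) ≤
        eNorm z * (⨆ p : Fin S × Fin m, |A p.1 p.2|) * specNorm X := by
  set s : ℝ := ⨆ ν : Fin S, specNorm (X * Matrix.diagonal fun j => A ν j) with hs
  have hs0 : 0 ≤ s := Real.iSup_nonneg fun ν => specNorm_nonneg _
  set a : ℝ := ⨆ p : Fin S × Fin m, |A p.1 p.2| with ha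
  have ha0 : 0 ≤ a := Real.iSup_nonneg fun p => abs_nonneg _
  have hAbd : ∀ ν j, |A ν j| ≤ a := fun ν j =>
    le_ciSup (f := fun p : Fin S × Fin m => |A p.1 p.2|) (Set.finite_range _).bddAbove (ν, j)
  constructor
  · -- first inequality
    refine specNorm_le _ (mul_nonneg (eNorm_nonneg z) hs0) fun ξ hξ => ?_
    refine eNorm_le_of_sq_le_sq (mul_nonneg (eNorm_nonneg z) hs0) ?_
    have key : ∀ p : Fin S × Fin n,
        (khatriRao (Matrix.diagonal z * A) X).mulVec ξ p
          = z p.1 * (X * Matrix.diagonal fun j => A p.1 j).mulVec ξ p.2 := by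
      intro p
      simp only [Matrix.mulVec, dotProduct, khatriRao, Matrix.of_apply,
        Matrix.diagonal_mul, Matrix.mul_diagonal, Finset.mul_sum]
      refine Finset.sum_congr rfl fun j _ => ?_
      ring
    calc ∑ p : Fin S × Fin n, (khatriRao (Matrix.diagonal z * A) X).mulVec ξ p ^ 2
        = ∑ ν : Fin S, ∑ i : Fin n,
            (z ν * (X * Matrix.diagonal fun j => A ν j).mulVec ξ i) ^ 2 := by
          rw [Fintype.sum_prod_type]
          exact Finset.sum_congr rfl fun ν _ => Finset.sum_congr rfl fun i _ => by
            rw [key (ν, i)]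
      _ = ∑ ν : Fin S, z ν ^ 2 * ∑ i : Fin n,
            ((X * Matrix.diagonal fun j => A ν j).mulVec ξ i) ^ 2 := by
          refine Finset.sum_congr rfl fun ν _ => ?_
          rw [Finset.mul_sum]
          exact Finset.sum_congr rfl fun i _ => by ring
      _ ≤ ∑ ν : Fin S, z ν ^ 2 * s ^ 2 := by
          refine Finset.sum_le_sum fun ν _ => ?_
          refine mul_le_mul_of_nonneg_left ?_ (sq_nonneg _)
          rw [← sq_eNorm]
          have h1 : eNorm ((X * Matrix.diagonal fun j => A ν j).mulVec ξ) ≤ s :=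
            le_trans (le_specNorm _ hξ)
              (le_ciSup (f := fun ν : Fin S => specNorm (X * Matrix.diagonal fun j => A ν j)) (Set.finite_range _).bddAbove ν)
          exact pow_le_pow_left₀ (eNorm_nonneg _) h1 2
      _ = (eNorm z * s) ^ 2 := by
          rw [← Finset.sum_mul, mul_pow, sq_eNorm]
  · -- second inequality
    rw [mul_assoc]
    refine mul_le_mul_of_nonneg_left ?_ (eNorm_nonneg z)
    refine Real.iSup_le (fun ν => ?_) (mul_nonneg ha0 (specNorm_nonneg X))
    refine specNorm_le _ (mul_nonneg ha0 (specNorm_nonneg X)) fun ξ hξ => ?_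
    have hw : eNorm ((Matrix.diagonal fun j => A ν j).mulVec ξ) ≤ a := by
      refine eNorm_le_of_sq_le_sq ha0 ?_
      have : ∑ j, ((Matrix.diagonal fun j => A ν j).mulVec ξ j) ^ 2
          ≤ ∑ j, a ^ 2 * ξ j ^ 2 := by
        refine Finset.sum_le_sum fun j _ => ?_
        rw [Matrix.mulVec_diagonal, mul_pow]
        refine mul_le_mul_of_nonneg_right ?_ (sq_nonneg _)
        calc A ν j ^ 2 = |A ν j| ^ 2 := (sq_abs _).symm
          _ ≤ a ^ 2 := pow_le_pow_left₀ (abs_nonneg _) (hAbd ν j) 2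
      calc ∑ j, ((Matrix.diagonal fun j => A ν j).mulVec ξ j) ^ 2
          ≤ ∑ j, a ^ 2 * ξ j ^ 2 := this
        _ = a ^ 2 * ∑ j, ξ j ^ 2 := by rw [Finset.mul_sum]
        _ = a ^ 2 := by rw [← sq_eNorm, hξ]; ring
    calc eNorm ((X * Matrix.diagonal fun j => A ν j).mulVec ξ)
        = eNorm (X.mulVec ((Matrix.diagonal fun j => A ν j).mulVec ξ)) := by
          rw [Matrix.mulVec_mulVec]
      _ ≤ specNorm X * eNorm ((Matrix.diagonal fun j => A ν j).mulVec ξ) :=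
          eNorm_mulVec_le X _
      _ ≤ specNorm X * a :=
          mul_le_mul_of_nonneg_left hw (specNorm_nonneg X)
      _ = a * specNorm X := mul_comm _ _
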